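/- Let n ≥ 1, let λ, μ, ν be partitions of n, let π be a permutation of Fin n whose orbit type is λ, and let ω₀ be any element of K_λ. Then the number of pairs (ω₁, ω₂) ∈ K_μ × K_ν with ω₁∘ω₂ = ω₀ equals 2ⁿ·n! times the cardinality of G_{μ,ν}(π). (In other words, the connection coefficient b^λ_{μν} of the double coset algebra of (S_{2n}, B_n) satisfies b^λ_{μν} = |B_n|·|G^λ_{μν}|, where |B_n| = 2ⁿ·n!.) -/

import Mathlib

/- For partitions λ, μ, ν of n, a permutation π of Fin n of orbit type λ, and any
   ω₀ ∈ K_λ, the number of pairs (ω₁, ω₂) ∈ K_μ × K_ν with ω₁∘ω₂ = ω₀ equals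
   2ⁿ·n! times |G_{μ,ν}(π)|:  b^λ_{μν} = |B_n|·|G^λ_{μν}| with |B_n| = 2ⁿ·n!. -/

open Equiv

/-- The orbit type of a permutation: the multiset of sizes of the orbits of the cyclic
    group it generates, i.e. its cycle lengths with each fixed point contributing a
    part equal to 1. -/
noncomputable def orbitType {X : Type} [Fintype X] [DecidableEq X]
    (ω : Equiv.Perm X) : Multiset ℕ :=
  ω.cycleType + Multiset.replicate (Finset.univ.filter fun x => ω x = x).card 1

/-- A matching on V: a fixed-point-free involution. -/
def IsMatching {V : Type} (δ : Equiv.Perm V) : Prop :=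
  (∀ v, δ (δ v) = v) ∧ ∀ v, δ v ≠ v

/-- The canonical matching g : inl i ↦ inr i, inr i ↦ inl i. -/
def gMatch (n : ℕ) : Equiv.Perm (Fin n ⊕ Fin n) := Equiv.sumComm (Fin n) (Fin n)

/-- The matching b_π : inr i ↦ inl (π i), inl j ↦ inr (π⁻¹ j). -/
def bMatch {n : ℕ} (π : Equiv.Perm (Fin n)) : Equiv.Perm (Fin n ⊕ Fin n) :=
  (Equiv.sumCongr (π⁻¹ : Equiv.Perm (Fin n)) π).trans (Equiv.sumComm (Fin n) (Fin n))

/-- G_{μ,ν}(π): the matchings δ with orbit type of g∘δ equal to μ ⊎ μ and orbit type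
    of b_π∘δ equal to ν ⊎ ν. -/
def Gset {n : ℕ} (μ ν : Multiset ℕ) (π : Equiv.Perm (Fin n)) :
    Set (Equiv.Perm (Fin n ⊕ Fin n)) :=
  {δ | IsMatching δ ∧ orbitType (gMatch n * δ) = μ + μ ∧ orbitType (bMatch π * δ) = ν + ν}

/-- K_μ: the permutations ω of Fin n ⊕ Fin n such that the orbit type of g∘ω∘g∘ω⁻¹
    equals μ ⊎ μ. -/
def Kset {n : ℕ} (μ : Multiset ℕ) : Set (Equiv.Perm (Fin n ⊕ Fin n)) :=
  {ω | orbitType (gMatch n * ω * gMatch n * ω⁻¹) = μ + μ}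

open Function



/-- number of points of minimal period k -/
noncomputable def countP {X : Type} [Fintype X] [DecidableEq X] (ω : Equiv.Perm X) (k : ℕ) : ℕ :=
  (Finset.univ.filter fun x => Function.minimalPeriod ⇑ω x = k).card

variable {X : Type} [Fintype X] [DecidableEq X]

lemma isPeriodic_perm_iff (ω : Equiv.Perm X) (j : ℕ) (x : X) :
    Function.IsPeriodicPt ⇑ω j x ↔ (ω ^ j) x = x := by
  rw [Function.IsPeriodicPt, Function.IsFixedPt, Equiv.Perm.coe_pow]

lemma mp_pos (ω : Equiv.Perm X) (x : X) : 0 < Function.minimalPeriod ⇑ω x := by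
  apply Function.IsPeriodicPt.minimalPeriod_pos (orderOf_pos ω)
  rw [isPeriodic_perm_iff, pow_orderOf_eq_one]; rfl

lemma mp_one_iff (ω : Equiv.Perm X) (x : X) :
    Function.minimalPeriod ⇑ω x = 1 ↔ ω x = x :=
  Function.minimalPeriod_eq_one_iff_isFixedPt

lemma mp_eq_card_support_cycleOf (ω : Equiv.Perm X) (x : X) (hx : ω x ≠ x) :
    Function.minimalPeriod ⇑ω x = (ω.cycleOf x).support.card := by
  set c := ω.cycleOf x with hc
  have hcx : c x ≠ x := by rwa [hc, Equiv.Perm.cycleOf_apply_self]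
  have hcyc : c.IsCycle := ω.isCycle_cycleOf hx
  have hiter : ∀ j : ℕ, Function.IsPeriodicPt ⇑ω j x ↔ Function.IsPeriodicPt ⇑c j x := by
    intro j
    rw [isPeriodic_perm_iff, isPeriodic_perm_iff, hc, Equiv.Perm.cycleOf_pow_apply_self]
  have h1 : Function.minimalPeriod ⇑ω x = Function.minimalPeriod ⇑c x := by
    apply Nat.dvd_antisymm
    · exact Function.IsPeriodicPt.minimalPeriod_dvd
        ((hiter _).2 (Function.isPeriodicPt_minimalPeriod ⇑c x))
    · exact Function.IsPeriodicPt.minimalPeriod_dvd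
        ((hiter _).1 (Function.isPeriodicPt_minimalPeriod ⇑ω x))
  have h2 : Function.minimalPeriod ⇑c x = orderOf c := by
    apply Nat.dvd_antisymm
    · apply Function.IsPeriodicPt.minimalPeriod_dvd
      rw [isPeriodic_perm_iff, pow_orderOf_eq_one]; rfl
    · apply orderOf_dvd_of_pow_eq_one
      rw [hcyc.pow_eq_one_iff' hcx, ← isPeriodic_perm_iff]
      exact Function.isPeriodicPt_minimalPeriod ⇑c x
  rw [h1, h2, hcyc.orderOf]

/-- master counting lemma -/
lemma orbitType_count (ω : Equiv.Perm X) (k : ℕ) :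
    k * (orbitType ω).count k = countP ω k := by
  rcases Nat.eq_zero_or_pos k with rfl | hk
  · simp only [zero_mul, countP]
    symm
    rw [Finset.card_eq_zero, Finset.filter_eq_empty_iff]
    intro x _
    exact (mp_pos ω x).ne'
  rcases Nat.lt_or_ge k 2 with hk1 | hk2
  · interval_cases k
    · simp only [orbitType, Multiset.count_add, Multiset.count_replicate, if_pos rfl, one_mul,
        countP]
      have h0 : Multiset.count 1 ω.cycleType = 0 := by
        rw [Multiset.count_eq_zero]
        intro h
        exact absurd (Equiv.Perm.two_le_of_mem_cycleType h) (by norm_num)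
      rw [h0, zero_add, if_pos trivial]
      congr 1
      ext x
      simp [mp_one_iff, Function.IsFixedPt]
  · -- k ≥ 2
    have hrep : Multiset.count k (Multiset.replicate (Finset.univ.filter fun x => ω x = x).card 1)
        = 0 := by
      rw [Multiset.count_replicate, if_neg (by omega)]
    rw [orbitType, Multiset.count_add, hrep, Nat.add_zero]
    have hcount : Multiset.count k ω.cycleType
        = (ω.cycleFactorsFinset.filter fun c => k = (Finset.card ∘ Equiv.Perm.support) c).card := by
      rw [Equiv.Perm.cycleType_def, Multiset.count_map]
      rfl
    rw [hcount]
    have hset : (Finset.univ.filter fun x => Function.minimalPeriod ⇑ω x = k)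
        = (ω.cycleFactorsFinset.filter fun c => k = (Finset.card ∘ Equiv.Perm.support) c).biUnion
          (fun c => c.support) := by
      ext x
      simp only [Finset.mem_filter, Finset.mem_univ, true_and, Finset.mem_biUnion,
        Function.comp_apply]
      constructor
      · intro hmp
        have hx : ω x ≠ x := by
          intro h
          rw [(mp_one_iff ω x).2 h] at hmp
          omega
        refine ⟨ω.cycleOf x, ⟨?_, ?_⟩, ?_⟩
        · exact Equiv.Perm.cycleOf_mem_cycleFactorsFinset_iff.2 (Equiv.Perm.mem_support.2 hx)
        · rw [← mp_eq_card_support_cycleOf ω x hx]; exact hmp.symm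
        · rw [Equiv.Perm.mem_support_cycleOf_iff]
          exact ⟨Equiv.Perm.SameCycle.refl _ _, Equiv.Perm.mem_support.2 hx⟩
      · rintro ⟨c, ⟨hcf, hck⟩, hxc⟩
        have hceq : c = ω.cycleOf x := Equiv.Perm.cycle_is_cycleOf hxc hcf
        have hx : ω x ≠ x := by
          have h2 := (Equiv.Perm.mem_cycleFactorsFinset_iff.1 hcf).2 x hxc
          have hcx : c x ≠ x := Equiv.Perm.mem_support.1 hxc
          rwa [h2] at hcx
        rw [mp_eq_card_support_cycleOf ω x hx, ← hceq]
        exact hck.symm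
    rw [countP, hset, Finset.card_biUnion]
    · rw [Finset.sum_congr rfl (fun c hc => ((Finset.mem_filter.1 hc).2).symm), Finset.sum_const,
        smul_eq_mul, mul_comm]
    · intro c hc d hd hcd
      have hdisj := Equiv.Perm.cycleFactorsFinset_pairwise_disjoint ω
        (Finset.mem_filter.1 hc).1 (Finset.mem_filter.1 hd).1 hcd
      exact Equiv.Perm.Disjoint.disjoint_support hdisj

section Tools
set_option linter.unusedSectionVars false

variable {Y : Type} [Fintype Y] [DecidableEq Y]

lemma zero_not_mem_orbitType (ω : Equiv.Perm X) : (0 : ℕ) ∉ orbitType ω := by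
  intro h
  rw [orbitType, Multiset.mem_add] at h
  rcases h with h | h
  · exact absurd (Equiv.Perm.two_le_of_mem_cycleType h) (by norm_num)
  · exact absurd (Multiset.eq_of_mem_replicate h) (by norm_num)

lemma orbitType_ext {ω₁ : Equiv.Perm X} {ω₂ : Equiv.Perm Y}
    (h : ∀ k, countP ω₁ k = countP ω₂ k) : orbitType ω₁ = orbitType ω₂ := by
  ext k
  rcases Nat.eq_zero_or_pos k with rfl | hk
  · rw [Multiset.count_eq_zero.2 (zero_not_mem_orbitType ω₁),
      Multiset.count_eq_zero.2 (zero_not_mem_orbitType ω₂)]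
  · exact Nat.eq_of_mul_eq_mul_left hk (by rw [orbitType_count, orbitType_count, h])

lemma pow_semiconj {ω : Equiv.Perm X} {ω' : Equiv.Perm Y} {f : X → Y}
    (hsc : ∀ x, f (ω x) = ω' (f x)) (j : ℕ) (x : X) : f ((ω ^ j) x) = (ω' ^ j) (f x) := by
  induction j generalizing x with
  | zero => simp
  | succ j ih =>
    rw [pow_succ, Equiv.Perm.mul_apply, ih (ω x), hsc, ← Equiv.Perm.mul_apply, ← pow_succ]

lemma mp_semiconj {ω : Equiv.Perm X} {ω' : Equiv.Perm Y} {f : X → Y} (hf : Function.Injective f)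
    (hsc : ∀ x, f (ω x) = ω' (f x)) (x : X) :
    Function.minimalPeriod ⇑ω' (f x) = Function.minimalPeriod ⇑ω x := by
  rw [Function.minimalPeriod_eq_minimalPeriod_iff]
  intro j
  rw [isPeriodic_perm_iff, isPeriodic_perm_iff, ← pow_semiconj hsc]
  exact hf.eq_iff

lemma mp_inv (ω : Equiv.Perm X) (x : X) :
    Function.minimalPeriod ⇑ω⁻¹ x = Function.minimalPeriod ⇑ω x := by
  rw [Function.minimalPeriod_eq_minimalPeriod_iff]
  intro j
  rw [isPeriodic_perm_iff, isPeriodic_perm_iff, inv_pow, Equiv.Perm.inv_eq_iff_eq]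
  exact ⟨fun h => h.symm, fun h => h.symm⟩

lemma countP_congr {ω₁ : Equiv.Perm X} {ω₂ : Equiv.Perm Y} (e : X ≃ Y)
    (h : ∀ x, Function.minimalPeriod ⇑ω₂ (e x) = Function.minimalPeriod ⇑ω₁ x) (k : ℕ) :
    countP ω₁ k = countP ω₂ k := by
  apply Finset.card_bij (fun x _ => e x)
  · intro x hx
    simp only [Finset.mem_filter, Finset.mem_univ, true_and] at hx ⊢
    rw [h]; exact hx
  · intro x _ y _ hxy
    exact e.injective hxy
  · intro y hy
    simp only [Finset.mem_filter, Finset.mem_univ, true_and] at hy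
    exact ⟨e.symm y, by simp only [Finset.mem_filter, Finset.mem_univ, true_and,
      ← h (e.symm y), Equiv.apply_symm_apply]; exact hy, by simp⟩

lemma orbitType_conj (c ω : Equiv.Perm X) : orbitType (c * ω * c⁻¹) = orbitType ω := by
  apply orbitType_ext
  intro k
  apply countP_congr (c⁻¹ : Equiv.Perm X)
  intro x
  apply mp_semiconj (c⁻¹ : Equiv.Perm X).injective
  intro z
  simp only [Equiv.Perm.mul_apply, Equiv.Perm.coe_inv, Equiv.symm_apply_apply]

lemma orbitType_inv (ω : Equiv.Perm X) : orbitType ω⁻¹ = orbitType ω := by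
  refine orbitType_ext fun k => (countP_congr (Equiv.refl X) (fun x => ?_) k).symm
  simp [mp_inv]
  exact mp_inv ω x

lemma countP_sumCongr (σ : Equiv.Perm X) (τ : Equiv.Perm Y) (k : ℕ) :
    countP (Equiv.sumCongr σ τ) k = countP σ k + countP τ k := by
  have hl : ∀ x : X, Function.minimalPeriod ⇑(Equiv.sumCongr σ τ) (Sum.inl x)
      = Function.minimalPeriod ⇑σ x :=
    fun x => mp_semiconj (f := Sum.inl) Sum.inl_injective (fun z => by simp) x
  have hr : ∀ y : Y, Function.minimalPeriod ⇑(Equiv.sumCongr σ τ) (Sum.inr y)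
      = Function.minimalPeriod ⇑τ y :=
    fun y => mp_semiconj (f := Sum.inr) Sum.inr_injective (fun z => by simp) y
  unfold countP
  rw [← Finset.card_disjSum]
  congr 1
  ext z
  cases z with
  | inl x => simp [Finset.inl_mem_disjSum, hl]
  | inr y => simp [Finset.inr_mem_disjSum, hr]

lemma orbitType_sumCongr (σ : Equiv.Perm X) (τ : Equiv.Perm Y) :
    orbitType (Equiv.sumCongr σ τ) = orbitType σ + orbitType τ := by
  ext k
  rcases Nat.eq_zero_or_pos k with rfl | hk
  · rw [Multiset.count_eq_zero.2 (zero_not_mem_orbitType _), Multiset.count_add,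
      Multiset.count_eq_zero.2 (zero_not_mem_orbitType _),
      Multiset.count_eq_zero.2 (zero_not_mem_orbitType _)]
  · apply Nat.eq_of_mul_eq_mul_left hk
    rw [orbitType_count, Multiset.count_add, Nat.mul_add, orbitType_count, orbitType_count,
      countP_sumCongr]

end Tools

section Matching


variable {V : Type}

lemma IsMatching.inv_eq {δ : Equiv.Perm V} (h : IsMatching δ) : δ⁻¹ = δ := by
  ext v
  rw [Equiv.Perm.inv_eq_iff_eq]
  exact (h.1 v).symm

lemma IsMatching.conj {δ : Equiv.Perm V} (h : IsMatching δ) (c : Equiv.Perm V) :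
    IsMatching (c * δ * c⁻¹) := by
  constructor
  · intro z
    simp only [Equiv.Perm.mul_apply, Equiv.Perm.coe_inv, Equiv.symm_apply_apply]
    rw [h.1, Equiv.apply_symm_apply]
  · intro z hz
    simp only [Equiv.Perm.mul_apply] at hz
    apply h.2 (c⁻¹ z)
    apply Equiv.injective c
    rw [hz, Equiv.Perm.coe_inv, Equiv.apply_symm_apply]

lemma matching_mul_rel {g b : Equiv.Perm V} (hg : IsMatching g) (hb : IsMatching b)
    (t : ℤ) : g * (g * b) ^ t = (g * b) ^ (-t) * g := by
  have hgg : g * g = 1 := by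
    ext z
    exact hg.1 z
  have h1 : g⁻¹ * (g * b) * g = (g * b)⁻¹ := by
    rw [mul_inv_rev, hb.inv_eq, hg.inv_eq, ← mul_assoc, hgg, one_mul]
  have h2 : (g * b) ^ (-t) = g⁻¹ * (g * b) ^ t * g := by
    have h3 := map_zpow (MulAut.conj g⁻¹) (g * b) t
    simp only [MulAut.conj_apply, inv_inv] at h3
    rw [h1, inv_zpow, ← zpow_neg] at h3
    exact h3.symm
  rw [h2, mul_assoc, hgg, mul_one, hg.inv_eq]

lemma matching_mul_rel_apply {g b : Equiv.Perm V} (hg : IsMatching g) (hb : IsMatching b)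
    (t : ℤ) (z : V) : g (((g * b) ^ t) z) = ((g * b) ^ (-t)) (g z) := by
  have := congrArg (fun σ : Equiv.Perm V => σ z) (matching_mul_rel hg hb t)
  simpa using this

end Matching

section Walk

variable {W : Type}

lemma perm_zpow_dvd (p : Equiv.Perm W) (x₀ : W) (t : ℤ) :
    (p ^ t) x₀ = x₀ ↔ ((Function.minimalPeriod ⇑p x₀ : ℤ) ∣ t) := by
  have h := MulAction.zpow_smul_eq_iff_minimalPeriod_dvd (a := p) (b := x₀) (n := t)
  simpa [Equiv.Perm.smul_def] using h

lemma b_eq_g_p {g b : Equiv.Perm W} (hg : IsMatching g) (z : W) : b z = g ((g * b) z) := by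
  simp only [Equiv.Perm.mul_apply]
  rw [hg.1]

lemma walk_disjoint {g b : Equiv.Perm W} (hg : IsMatching g) (hb : IsMatching b)
    (x₀ : W) (i j : ℤ) : g (((g * b) ^ i) x₀) ≠ ((g * b) ^ j) x₀ := by
  intro heq
  set p := g * b with hp
  set K := Function.minimalPeriod ⇑p x₀ with hKdef
  set m := i + j with hm
  have hgen : ∀ s : ℤ, g ((p ^ s) x₀) = (p ^ (m - s)) x₀ := by
    intro s
    have h1 : (p ^ s) x₀ = (p ^ (s - i)) ((p ^ i) x₀) := by
      rw [← Equiv.Perm.mul_apply, ← zpow_add]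
      congr 2
      ring
    rw [h1, matching_mul_rel_apply hg hb (s - i) ((p ^ i) x₀), heq, ← Equiv.Perm.mul_apply,
      ← zpow_add]
    congr 2
    ring
  have hgfpf : ∀ s : ℤ, ¬ (K : ℤ) ∣ (m - 2 * s) := by
    intro s hdv
    refine hg.2 ((p ^ s) x₀) ?_
    have h2 : (p ^ (m - s)) x₀ = (p ^ s) ((p ^ (m - 2 * s)) x₀) := by
      rw [← Equiv.Perm.mul_apply, ← zpow_add]
      congr 2
      ring
    rw [hgen s, h2, (perm_zpow_dvd p x₀ _).2 hdv]
  have hbfpf : ∀ s : ℤ, ¬ (K : ℤ) ∣ (m - 1 - 2 * s) := by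
    intro s hdv
    refine hb.2 ((p ^ s) x₀) ?_
    have h3 : b ((p ^ s) x₀) = (p ^ (m - s - 1)) x₀ := by
      rw [b_eq_g_p hg, ← hp]
      have h4 : p ((p ^ s) x₀) = (p ^ (s + 1)) x₀ := by
        rw [← Equiv.Perm.mul_apply, ← zpow_one_add]
        congr 2
        ring
      rw [h4, hgen (s + 1)]
      congr 2
      ring
    have h5 : (p ^ (m - s - 1)) x₀ = (p ^ s) ((p ^ (m - 1 - 2 * s)) x₀) := by
      rw [← Equiv.Perm.mul_apply, ← zpow_add]
      congr 2
      ring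
    rw [h3, h5, (perm_zpow_dvd p x₀ _).2 hdv]
  rcases Int.even_or_odd (K : ℤ) with ⟨t, ht⟩ | ⟨t, ht⟩
  · rcases Int.even_or_odd m with ⟨u, hu⟩ | ⟨u, hu⟩
    · refine hgfpf u ?_
      have : m - 2 * u = 0 := by omega
      rw [this]
      exact dvd_zero _
    · refine hbfpf u ?_
      have : m - 1 - 2 * u = 0 := by omega
      rw [this]
      exact dvd_zero _
  · refine hgfpf (m * (t + 1)) ⟨-m, ?_⟩
    rw [ht]
    ring

end Walk

section Pack

def canG (k : ℕ) : Fin k ⊕ Fin k → Fin k ⊕ Fin k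
  | .inl j => .inr j
  | .inr j => .inl j

def canB (k : ℕ) : Fin k ⊕ Fin k → Fin k ⊕ Fin k
  | .inl j => .inr ⟨((j : ℕ) + 1) % k, Nat.mod_lt _ j.pos⟩
  | .inr j => .inl ⟨((j : ℕ) + (k - 1)) % k, Nat.mod_lt _ j.pos⟩

variable {W : Type} [Fintype W] [DecidableEq W]

omit [Fintype W] [DecidableEq W] in
lemma mp_g_apply {g b : Equiv.Perm W} (hg : IsMatching g) (hb : IsMatching b) (z : W) :
    Function.minimalPeriod ⇑(g * b) (g z) = Function.minimalPeriod ⇑(g * b) z := by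
  have key : ∀ n : ℕ, ((g * b) ^ n) (g z) = g z ↔ ((g * b) ^ n) z = z := by
    intro n
    have h1 : ((g * b) ^ ((n : ℕ) : ℤ)) (g z) = g (((g * b) ^ (-((n : ℕ) : ℤ))) z) := by
      have h2 := matching_mul_rel_apply hg hb (-((n : ℕ) : ℤ)) z
      rw [neg_neg] at h2
      exact h2.symm
    rw [← zpow_natCast (g * b) n, h1, Equiv.apply_eq_iff_eq, perm_zpow_dvd, dvd_neg,
      ← perm_zpow_dvd]
  rw [Function.minimalPeriod_eq_minimalPeriod_iff]
  intro n
  simp only [Function.IsPeriodicPt, Function.IsFixedPt, ← Equiv.Perm.coe_pow]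
  exact key n

lemma walk_pack {g b : Equiv.Perm W} (hg : IsMatching g) (hb : IsMatching b)
    (x₀ : W) (k : ℕ) (hk : Function.minimalPeriod ⇑(g * b) x₀ = k) :
    ∃ e : Fin k ⊕ Fin k → W,
      Function.Injective e ∧
      (∀ w, g (e w) = e (canG k w)) ∧
      (∀ w, b (e w) = e (canB k w)) ∧
      (∀ w, Function.minimalPeriod ⇑(g * b) (e w) = k) := by
  set p := g * b with hp
  have hkpos : 0 < k := hk ▸ mp_pos p x₀
  have hper : x₀ ∈ Function.periodicPts ⇑p :=
    Function.minimalPeriod_pos_iff_mem_periodicPts.1 (hk ▸ hkpos)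
  have hmod : ∀ a : ℕ, (p ^ (a % k)) x₀ = (p ^ a) x₀ := by
    intro a
    have h := MulAction.pow_smul_mod_minimalPeriod p x₀ a
    simp only [Equiv.Perm.smul_def] at h
    have hmp : Function.minimalPeriod (fun x => p x) x₀ = k := hk
    rwa [hmp] at h
  have hpk : (p ^ k) x₀ = x₀ := by
    have h := Function.iterate_minimalPeriod (f := ⇑p) (x := x₀)
    rwa [hk, ← Equiv.Perm.coe_pow] at h
  have hpoint : ∀ a : ℕ, Function.minimalPeriod ⇑p ((p ^ a) x₀) = k := by
    intro a
    have h := Function.minimalPeriod_apply_iterate hper a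
    rw [← Equiv.Perm.coe_pow] at h
    rw [h, hk]
  refine ⟨fun w => match w with
    | .inl j => (p ^ (j : ℕ)) x₀
    | .inr j => g ((p ^ (j : ℕ)) x₀), ?_, ?_, ?_, ?_⟩
  · -- injective
    have hinl : ∀ i j : Fin k, (p ^ (i : ℕ)) x₀ = (p ^ (j : ℕ)) x₀ → i = j := by
      intro i j hij
      apply Fin.ext
      apply Function.iterate_injOn_Iio_minimalPeriod (f := ⇑p) (x := x₀)
        (by rw [hk]; exact i.2) (by rw [hk]; exact j.2)
      show (⇑p)^[(i : ℕ)] x₀ = (⇑p)^[(j : ℕ)] x₀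
      simp only [Equiv.Perm.iterate_eq_pow]
      exact hij
    have hdisj : ∀ i j : Fin k, g ((p ^ (i : ℕ)) x₀) ≠ (p ^ (j : ℕ)) x₀ := by
      intro i j hij
      refine walk_disjoint hg hb x₀ ((i : ℕ) : ℤ) ((j : ℕ) : ℤ) ?_
      rw [zpow_natCast, zpow_natCast, ← hp]
      exact hij
    intro w w' hww
    match w, w' with
    | .inl i, .inl j => simp only at hww; rw [hinl i j hww]
    | .inl i, .inr j => exact absurd hww.symm (hdisj j i)
    | .inr i, .inl j => exact absurd hww (hdisj i j)
    | .inr i, .inr j => simp only at hww; rw [hinl i j (g.injective hww)]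
  · -- g action
    intro w
    match w with
    | .inl j => rfl
    | .inr j => simp only [canG]; rw [hg.1]
  · -- b action
    intro w
    match w with
    | .inl j =>
      simp only [canB]
      rw [b_eq_g_p hg, ← hp, hmod]
      congr 1
      rw [← Equiv.Perm.mul_apply]
      congr 1
      rw [← pow_succ']
    | .inr j =>
      simp only [canB]
      have h1 : b (g ((p ^ (j : ℕ)) x₀)) = p⁻¹ ((p ^ (j : ℕ)) x₀) := by
        rw [b_eq_g_p hg, ← hp]
        have h2 : p (g ((p ^ (j : ℕ)) x₀)) = g (p⁻¹ ((p ^ (j : ℕ)) x₀)) := by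
          have h3 := matching_mul_rel_apply hg hb (-1 : ℤ) ((p ^ (j : ℕ)) x₀)
          rw [← hp] at h3
          simp only [zpow_neg, zpow_one, neg_neg] at h3
          exact h3.symm
        rw [h2, hg.1]
      rw [h1, hmod]
      apply Equiv.injective p
      rw [Equiv.Perm.coe_inv, Equiv.apply_symm_apply, ← Equiv.Perm.mul_apply, ← pow_succ',
        show ((j : ℕ) + (k - 1)) + 1 = (j : ℕ) + k by omega, pow_add,
        Equiv.Perm.mul_apply, hpk]
  · -- minimal period
    intro w
    match w with
    | .inl j => exact hpoint (j : ℕ)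
    | .inr j =>
      have h := mp_g_apply hg hb ((p ^ (j : ℕ)) x₀)
      rw [← hp] at h
      exact h.trans (hpoint (j : ℕ))

end Pack

section Compl
set_option linter.unusedSectionVars false

variable {W : Type} [Fintype W] [DecidableEq W]

lemma countP_compl (ω : Equiv.Perm W) (S : Finset W)
    (hiff : ∀ z, (¬ z ∈ S) ↔ ¬ (ω z ∈ S)) (k : ℕ)
    (hSk : ∀ z ∈ S, Function.minimalPeriod ⇑ω z = k) (k' : ℕ) :
    countP ω k' = countP (ω.subtypePerm (p := fun z => ¬ z ∈ S) (fun z => (hiff z).symm)) k' + (if k' = k then S.card else 0) := by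
  have hsplit := Finset.card_filter_add_card_filter_not
    (s := Finset.univ.filter fun z => Function.minimalPeriod ⇑ω z = k')
    (p := fun z => z ∈ S)
  have hA : ((Finset.univ.filter fun z => Function.minimalPeriod ⇑ω z = k').filter
      fun z => z ∈ S).card = (if k' = k then S.card else 0) := by
    by_cases hkk : k' = k
    · subst hkk
      rw [if_pos rfl]
      congr 1
      ext z
      simp only [Finset.mem_filter, Finset.mem_univ, true_and]
      exact ⟨fun h => h.2, fun h => ⟨hSk z h, h⟩⟩
    · rw [if_neg hkk, Finset.card_eq_zero, Finset.filter_eq_empty_iff]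
      intro z hz hzS
      rw [Finset.mem_filter] at hz
      exact hkk (hz.2 ▸ (hz.2.symm.trans (hSk z hzS)))
  have hmp : ∀ z : {z // ¬ z ∈ S}, Function.minimalPeriod ⇑ω (z : W)
      = Function.minimalPeriod ⇑(ω.subtypePerm (p := fun z => ¬ z ∈ S) (fun z => (hiff z).symm)) z :=
    fun z => mp_semiconj Subtype.val_injective (fun _ => rfl) z
  have hB : ((Finset.univ.filter fun z => Function.minimalPeriod ⇑ω z = k').filter
      fun z => ¬ z ∈ S).card = countP (ω.subtypePerm (p := fun z => ¬ z ∈ S) (fun z => (hiff z).symm)) k' := by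
    rw [countP]
    symm
    apply Finset.card_bij (fun (z : {z // ¬ z ∈ S}) _ => (z : W))
    · intro z hz
      simp only [Finset.mem_filter, Finset.mem_univ, true_and] at hz ⊢
      exact ⟨by rw [hmp z]; exact hz, z.2⟩
    · intro z _ z' _ h
      exact Subtype.val_injective h
    · intro w hw
      simp only [Finset.mem_filter, Finset.mem_univ, true_and] at hw
      refine ⟨⟨w, hw.2⟩, ?_, rfl⟩
      simp only [Finset.mem_filter, Finset.mem_univ, true_and]
      rw [← hmp ⟨w, hw.2⟩]
      exact hw.1
  rw [countP, ← hsplit, hA, hB, Nat.add_comm]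

end Compl

lemma PT_core (N : ℕ) : ∀ (X : Type) [Fintype X] [DecidableEq X]
    (Y : Type) [Fintype Y] [DecidableEq Y]
    (g₁ b₁ : Equiv.Perm X) (g₂ b₂ : Equiv.Perm Y),
    Fintype.card X = N →
    IsMatching g₁ → IsMatching b₁ → IsMatching g₂ → IsMatching b₂ →
    (∀ k, countP (g₁ * b₁) k = countP (g₂ * b₂) k) →
    ∃ c : X ≃ Y, (∀ x, c (g₁ x) = g₂ (c x)) ∧ (∀ x, c (b₁ x) = b₂ (c x)) := by
  induction N using Nat.strong_induction_on with
  | _ N IH =>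
  intro X _ _ Y _ _ g₁ b₁ g₂ b₂ hcard hg₁ hb₁ hg₂ hb₂ hcnt
  by_cases hX : IsEmpty X
  · have hY : IsEmpty Y := by
      rw [← not_nonempty_iff]
      rintro ⟨y⟩
      have h1 : 0 < countP (g₂ * b₂) (Function.minimalPeriod ⇑(g₂ * b₂) y) := by
        unfold countP
        exact Finset.card_pos.2 ⟨y, Finset.mem_filter.2 ⟨Finset.mem_univ y, rfl⟩⟩
      rw [← hcnt] at h1
      unfold countP at h1
      rw [Finset.univ_eq_empty, Finset.filter_empty, Finset.card_empty] at h1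
      omega
    exact ⟨Equiv.equivOfIsEmpty X Y, fun x => isEmptyElim x, fun x => isEmptyElim x⟩
  rw [not_isEmpty_iff] at hX
  obtain ⟨x₀⟩ := hX
  set k := Function.minimalPeriod ⇑(g₁ * b₁) x₀ with hkdef
  have hk : 0 < k := mp_pos _ _
  have h1 : 0 < countP (g₂ * b₂) k := by
    rw [← hcnt]
    unfold countP
    exact Finset.card_pos.2 ⟨x₀, Finset.mem_filter.2 ⟨Finset.mem_univ x₀, hkdef.symm⟩⟩
  unfold countP at h1
  obtain ⟨y₀, hy₀mem⟩ := Finset.card_pos.1 h1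
  have hy₀ : Function.minimalPeriod ⇑(g₂ * b₂) y₀ = k := (Finset.mem_filter.1 hy₀mem).2
  obtain ⟨e₁, he₁inj, hge₁, hbe₁, hmp₁⟩ := walk_pack hg₁ hb₁ x₀ k hkdef.symm
  obtain ⟨e₂, he₂inj, hge₂, hbe₂, hmp₂⟩ := walk_pack hg₂ hb₂ y₀ k hy₀
  set S₁ : Finset X := Finset.univ.image e₁ with hS₁
  set S₂ : Finset Y := Finset.univ.image e₂ with hS₂
  have hmem₁ : ∀ w, e₁ w ∈ S₁ := fun w => Finset.mem_image_of_mem e₁ (Finset.mem_univ w)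
  have hmem₂ : ∀ w, e₂ w ∈ S₂ := fun w => Finset.mem_image_of_mem e₂ (Finset.mem_univ w)
  have hex₁ : ∀ z ∈ S₁, ∃ w, e₁ w = z := by
    intro z hz
    obtain ⟨w, _, hw⟩ := Finset.mem_image.1 hz
    exact ⟨w, hw⟩
  have hex₂ : ∀ z ∈ S₂, ∃ w, e₂ w = z := by
    intro z hz
    obtain ⟨w, _, hw⟩ := Finset.mem_image.1 hz
    exact ⟨w, hw⟩
  have hclog₁ : ∀ z, z ∈ S₁ ↔ g₁ z ∈ S₁ := by
    intro z
    constructor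
    · intro hz
      obtain ⟨w, rfl⟩ := hex₁ z hz
      rw [hge₁]
      exact hmem₁ _
    · intro hz
      obtain ⟨w, hw⟩ := hex₁ _ hz
      have h2 : z = g₁ (e₁ w) := by rw [hw, hg₁.1]
      rw [h2, hge₁]
      exact hmem₁ _
  have hclob₁ : ∀ z, z ∈ S₁ ↔ b₁ z ∈ S₁ := by
    intro z
    constructor
    · intro hz
      obtain ⟨w, rfl⟩ := hex₁ z hz
      rw [hbe₁]
      exact hmem₁ _
    · intro hz
      obtain ⟨w, hw⟩ := hex₁ _ hz
      have h2 : z = b₁ (e₁ w) := by rw [hw, hb₁.1]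
      rw [h2, hbe₁]
      exact hmem₁ _
  have hclog₂ : ∀ z, z ∈ S₂ ↔ g₂ z ∈ S₂ := by
    intro z
    constructor
    · intro hz
      obtain ⟨w, rfl⟩ := hex₂ z hz
      rw [hge₂]
      exact hmem₂ _
    · intro hz
      obtain ⟨w, hw⟩ := hex₂ _ hz
      have h2 : z = g₂ (e₂ w) := by rw [hw, hg₂.1]
      rw [h2, hge₂]
      exact hmem₂ _
  have hclob₂ : ∀ z, z ∈ S₂ ↔ b₂ z ∈ S₂ := by
    intro z
    constructor
    · intro hz
      obtain ⟨w, rfl⟩ := hex₂ z hz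
      rw [hbe₂]
      exact hmem₂ _
    · intro hz
      obtain ⟨w, hw⟩ := hex₂ _ hz
      have h2 : z = b₂ (e₂ w) := by rw [hw, hb₂.1]
      rw [h2, hbe₂]
      exact hmem₂ _
  have hcg₁ : ∀ z, (¬ z ∈ S₁) ↔ ¬ (g₁ z ∈ S₁) := fun z => not_congr (hclog₁ z)
  have hcb₁ : ∀ z, (¬ z ∈ S₁) ↔ ¬ (b₁ z ∈ S₁) := fun z => not_congr (hclob₁ z)
  have hcg₂ : ∀ z, (¬ z ∈ S₂) ↔ ¬ (g₂ z ∈ S₂) := fun z => not_congr (hclog₂ z)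
  have hcb₂ : ∀ z, (¬ z ∈ S₂) ↔ ¬ (b₂ z ∈ S₂) := fun z => not_congr (hclob₂ z)
  have hp₁ : ∀ z, (¬ z ∈ S₁) ↔ ¬ ((g₁ * b₁) z ∈ S₁) := by
    intro z
    apply not_congr
    rw [hclob₁ z]
    exact hclog₁ (b₁ z)
  have hp₂ : ∀ z, (¬ z ∈ S₂) ↔ ¬ ((g₂ * b₂) z ∈ S₂) := by
    intro z
    apply not_congr
    rw [hclob₂ z]
    exact hclog₂ (b₂ z)
  set gR₁ := g₁.subtypePerm (p := fun z => ¬ z ∈ S₁) (fun z => (hcg₁ z).symm) with hgR₁def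
  set bR₁ := b₁.subtypePerm (p := fun z => ¬ z ∈ S₁) (fun z => (hcb₁ z).symm) with hbR₁def
  set gR₂ := g₂.subtypePerm (p := fun z => ¬ z ∈ S₂) (fun z => (hcg₂ z).symm) with hgR₂def
  set bR₂ := b₂.subtypePerm (p := fun z => ¬ z ∈ S₂) (fun z => (hcb₂ z).symm) with hbR₂def
  have hmulR₁ : gR₁ * bR₁ = (g₁ * b₁).subtypePerm (p := fun z => ¬ z ∈ S₁) (fun z => (hp₁ z).symm) := Equiv.ext fun z => Subtype.ext rfl
  have hmulR₂ : gR₂ * bR₂ = (g₂ * b₂).subtypePerm (p := fun z => ¬ z ∈ S₂) (fun z => (hp₂ z).symm) := Equiv.ext fun z => Subtype.ext rfl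
  have hgR₁m : IsMatching gR₁ :=
    ⟨fun z => Subtype.ext (hg₁.1 z), fun z h => hg₁.2 z (congrArg Subtype.val h)⟩
  have hbR₁m : IsMatching bR₁ :=
    ⟨fun z => Subtype.ext (hb₁.1 z), fun z h => hb₁.2 z (congrArg Subtype.val h)⟩
  have hgR₂m : IsMatching gR₂ :=
    ⟨fun z => Subtype.ext (hg₂.1 z), fun z h => hg₂.2 z (congrArg Subtype.val h)⟩
  have hbR₂m : IsMatching bR₂ :=
    ⟨fun z => Subtype.ext (hb₂.1 z), fun z h => hb₂.2 z (congrArg Subtype.val h)⟩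
  have hSk₁ : ∀ z ∈ S₁, Function.minimalPeriod ⇑(g₁ * b₁) z = k := by
    intro z hz
    obtain ⟨w, rfl⟩ := hex₁ z hz
    exact hmp₁ w
  have hSk₂ : ∀ z ∈ S₂, Function.minimalPeriod ⇑(g₂ * b₂) z = k := by
    intro z hz
    obtain ⟨w, rfl⟩ := hex₂ z hz
    exact hmp₂ w
  have hcardS₁ : S₁.card = k + k := by
    rw [hS₁, Finset.card_image_of_injective _ he₁inj, Finset.card_univ, Fintype.card_sum,
      Fintype.card_fin]
  have hcardS₂ : S₂.card = k + k := by
    rw [hS₂, Finset.card_image_of_injective _ he₂inj, Finset.card_univ, Fintype.card_sum,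
      Fintype.card_fin]
  have hcntR : ∀ k', countP (gR₁ * bR₁) k' = countP (gR₂ * bR₂) k' := by
    intro k'
    have e1 := countP_compl (g₁ * b₁) S₁ hp₁ k hSk₁ k'
    have e2 := countP_compl (g₂ * b₂) S₂ hp₂ k hSk₂ k'
    rw [hmulR₁, hmulR₂]
    have h3 := hcnt k'
    rw [e1, e2, hcardS₁, hcardS₂] at h3
    omega
  have hNpos : 0 < N := by
    rw [← hcard]
    exact Fintype.card_pos_iff.2 ⟨x₀⟩
  have hcard' : Fintype.card {z // ¬ z ∈ S₁} < N := by
    rw [Fintype.card_subtype_compl]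
    have h4 : Fintype.card {z // z ∈ S₁} = k + k := by
      rw [Fintype.card_coe, hcardS₁]
    rw [h4, hcard]
    omega
  obtain ⟨c', hcg', hcb'⟩ := IH (Fintype.card {z // ¬ z ∈ S₁}) hcard'
    {z // ¬ z ∈ S₁} {w // ¬ w ∈ S₂} gR₁ bR₁ gR₂ bR₂ rfl hgR₁m hbR₁m hgR₂m hbR₂m hcntR
  have he₁bij : Function.Bijective (fun w => (⟨e₁ w, hmem₁ w⟩ : {z // z ∈ S₁})) := by
    constructor
    · intro a b h
      exact he₁inj (congrArg Subtype.val h)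
    · rintro ⟨z, hz⟩
      obtain ⟨w, hw⟩ := hex₁ z hz
      exact ⟨w, Subtype.ext hw⟩
  have he₂bij : Function.Bijective (fun w => (⟨e₂ w, hmem₂ w⟩ : {z // z ∈ S₂})) := by
    constructor
    · intro a b h
      exact he₂inj (congrArg Subtype.val h)
    · rintro ⟨z, hz⟩
      obtain ⟨w, hw⟩ := hex₂ z hz
      exact ⟨w, Subtype.ext hw⟩
  set E₁ := Equiv.ofBijective _ he₁bij with hE₁
  set E₂ := Equiv.ofBijective _ he₂bij with hE₂
  set cTop : {z // z ∈ S₁} ≃ {w // w ∈ S₂} := E₁.symm.trans E₂ with hcTop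
  set c : X ≃ Y := (Equiv.sumCompl (· ∈ S₁)).symm.trans
    ((Equiv.sumCongr cTop c').trans (Equiv.sumCompl (· ∈ S₂))) with hc
  have hce : ∀ w, c (e₁ w) = e₂ w := by
    intro w
    rw [hc]
    simp only [Equiv.trans_apply]
    rw [Equiv.sumCompl_symm_apply_of_pos (hmem₁ w)]
    simp only [Equiv.sumCongr_apply, Sum.map_inl]
    rw [Equiv.sumCompl_apply_inl]
    have h5 : (⟨e₁ w, hmem₁ w⟩ : {z // z ∈ S₁}) = E₁ w := rfl
    rw [hcTop, h5]
    show ((E₂ (E₁.symm (E₁ w))) : Y) = e₂ w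
    rw [Equiv.symm_apply_apply]
    rfl
  have hcc : ∀ z : {z // ¬ z ∈ S₁}, c (z : X) = ((c' z : {w // ¬ w ∈ S₂}) : Y) := by
    intro z
    rw [hc]
    simp only [Equiv.trans_apply]
    rw [Equiv.sumCompl_symm_apply_of_neg z.2]
    simp only [Equiv.sumCongr_apply, Sum.map_inr]
    rw [Equiv.sumCompl_apply_inr]
  refine ⟨c, ?_, ?_⟩
  · intro x
    by_cases hx : x ∈ S₁
    · obtain ⟨w, rfl⟩ := hex₁ x hx
      rw [hge₁ w, hce (canG k w), hce w, hge₂ w]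
    · have hgx : ¬ g₁ x ∈ S₁ := (hcg₁ x).1 hx
      have h7 : c (g₁ x) = ((c' ⟨g₁ x, hgx⟩ : {w // ¬ w ∈ S₂}) : Y) := hcc ⟨g₁ x, hgx⟩
      have h8 : (⟨g₁ x, hgx⟩ : {z // ¬ z ∈ S₁}) = gR₁ ⟨x, hx⟩ := rfl
      rw [h7, h8, hcg' ⟨x, hx⟩, hcc ⟨x, hx⟩]
      rfl
  · intro x
    by_cases hx : x ∈ S₁
    · obtain ⟨w, rfl⟩ := hex₁ x hx
      rw [hbe₁ w, hce (canB k w), hce w, hbe₂ w]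
    · have hbx : ¬ b₁ x ∈ S₁ := (hcb₁ x).1 hx
      have h7 : c (b₁ x) = ((c' ⟨b₁ x, hbx⟩ : {w // ¬ w ∈ S₂}) : Y) := hcc ⟨b₁ x, hbx⟩
      have h8 : (⟨b₁ x, hbx⟩ : {z // ¬ z ∈ S₁}) = bR₁ ⟨x, hx⟩ := rfl
      rw [h7, h8, hcb' ⟨x, hx⟩, hcc ⟨x, hx⟩]
      rfl

section Assembly
set_option linter.unusedSectionVars false



variable {n : ℕ}

lemma gMatch_matching : IsMatching (gMatch n) := by
  constructor
  · rintro (i | i) <;> rfl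
  · rintro (i | i) <;> simp [gMatch]

lemma bMatch_matching (π : Equiv.Perm (Fin n)) : IsMatching (bMatch π) := by
  constructor
  · rintro (i | i) <;> simp [bMatch]
  · rintro (i | i) <;> simp [bMatch]

lemma gMatch_mul_bMatch (π : Equiv.Perm (Fin n)) :
    gMatch n * bMatch π = Equiv.sumCongr (π⁻¹ : Equiv.Perm (Fin n)) π := by
  ext x
  rcases x with i | i <;> rfl

lemma orbitType_g_bMatch (π : Equiv.Perm (Fin n)) {l : Multiset ℕ} (hπ : orbitType π = l) :
    orbitType (gMatch n * bMatch π) = l + l := by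
  rw [gMatch_mul_bMatch, orbitType_sumCongr]
  rw [show (π⁻¹ : Equiv.Perm (Fin n)) = (π : Equiv.Perm (Fin n))⁻¹ from rfl, orbitType_inv, hπ]

/-- countP is determined by orbitType -/
lemma countP_zero {X : Type} [Fintype X] [DecidableEq X] (ω : Equiv.Perm X) :
    countP ω 0 = 0 := by
  unfold countP
  rw [Finset.card_eq_zero, Finset.filter_eq_empty_iff]
  intro x _
  exact (mp_pos ω x).ne'

lemma countP_eq_of_orbitType {X Y : Type} [Fintype X] [DecidableEq X] [Fintype Y] [DecidableEq Y]
    {ω₁ : Equiv.Perm X} {ω₂ : Equiv.Perm Y} (h : orbitType ω₁ = orbitType ω₂) :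
    ∀ k, countP ω₁ k = countP ω₂ k := by
  intro k
  rcases Nat.eq_zero_or_pos k with rfl | hk
  · rw [countP_zero, countP_zero]
  · rw [← orbitType_count, ← orbitType_count, h]

lemma pair_conj {X : Type} [Fintype X] [DecidableEq X] {a b a' b' : Equiv.Perm X}
    (ha : IsMatching a) (hb : IsMatching b) (ha' : IsMatching a') (hb' : IsMatching b')
    (h : orbitType (a * b) = orbitType (a' * b')) :
    ∃ c : Equiv.Perm X, c * a * c⁻¹ = a' ∧ c * b * c⁻¹ = b' := by
  obtain ⟨c, h1, h2⟩ := PT_core (Fintype.card X) X X a b a' b' rfl ha hb ha' hb'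
    (countP_eq_of_orbitType h)
  refine ⟨c, ?_, ?_⟩
  · ext z
    simp only [Equiv.Perm.mul_apply]
    rw [h1, Equiv.Perm.coe_inv, Equiv.apply_symm_apply]
  · ext z
    simp only [Equiv.Perm.mul_apply]
    rw [h2, Equiv.Perm.coe_inv, Equiv.apply_symm_apply]

lemma matching_sq {X : Type} {δ : Equiv.Perm X} (h : IsMatching δ) : δ * δ = 1 := by
  ext z
  exact h.1 z

lemma matching_conj_g {δ : Equiv.Perm (Fin n ⊕ Fin n)} (hδ : IsMatching δ) :
    ∃ ω : Equiv.Perm (Fin n ⊕ Fin n), ω * gMatch n * ω⁻¹ = δ := by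
  obtain ⟨c, h1, _⟩ := pair_conj gMatch_matching gMatch_matching hδ hδ
    (by rw [matching_sq gMatch_matching, matching_sq hδ])
  exact ⟨c, h1⟩

end Assembly

section Central
set_option linter.unusedSectionVars false
variable {n : ℕ}

def flipFun (f : Fin n → Bool) : (Fin n ⊕ Fin n) → (Fin n ⊕ Fin n)
  | .inl i => if f i then .inr i else .inl i
  | .inr i => if f i then .inl i else .inr i

lemma flipFun_invol (f : Fin n → Bool) : Function.Involutive (flipFun f) := by
  rintro (i | i) <;> by_cases h : f i <;> simp [flipFun, h]

def bigT (p : Equiv.Perm (Fin n) × (Fin n → Bool)) : Equiv.Perm (Fin n ⊕ Fin n) :=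
  Equiv.sumCongr p.1 p.1 * (flipFun_invol p.2).toPerm

lemma bigT_apply_inl (p : Equiv.Perm (Fin n) × (Fin n → Bool)) (i : Fin n) :
    bigT p (Sum.inl i) = if p.2 i then Sum.inr (p.1 i) else Sum.inl (p.1 i) := by
  simp only [bigT, Equiv.Perm.mul_apply]
  show Equiv.sumCongr p.1 p.1 (flipFun p.2 (Sum.inl i)) = _
  by_cases h : p.2 i <;> simp [flipFun, h]

lemma bigT_apply_inr (p : Equiv.Perm (Fin n) × (Fin n → Bool)) (i : Fin n) :
    bigT p (Sum.inr i) = if p.2 i then Sum.inl (p.1 i) else Sum.inr (p.1 i) := by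
  simp only [bigT, Equiv.Perm.mul_apply]
  show Equiv.sumCongr p.1 p.1 (flipFun p.2 (Sum.inr i)) = _
  by_cases h : p.2 i <;> simp [flipFun, h]

lemma bigT_comm (p : Equiv.Perm (Fin n) × (Fin n → Bool)) :
    bigT p * gMatch n = gMatch n * bigT p := by
  ext x
  rcases x with i | i <;>
    [ (show bigT p (Sum.inr i) = gMatch n (bigT p (Sum.inl i)));
      (show bigT p (Sum.inl i) = gMatch n (bigT p (Sum.inr i)))] <;>
    rw [bigT_apply_inl, bigT_apply_inr] <;> by_cases h : p.2 i <;> simp [h, gMatch]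

lemma bigT_bij : Function.Bijective
    (fun p : Equiv.Perm (Fin n) × (Fin n → Bool) =>
      (⟨bigT p, bigT_comm p⟩ : {c : Equiv.Perm (Fin n ⊕ Fin n) // c * gMatch n = gMatch n * c})) := by
  constructor
  · rintro ⟨σ, f⟩ ⟨σ', f'⟩ h
    rw [Subtype.ext_iff] at h
    have hTT : bigT (σ, f) = bigT (σ', f') := h
    have h1 : ∀ i, bigT (σ, f) (Sum.inl i) = bigT (σ', f') (Sum.inl i) := fun i => by rw [hTT]
    have h2 : ∀ i : Fin n, f i = f' i ∧ σ i = σ' i := by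
      intro i
      have := h1 i
      rw [bigT_apply_inl, bigT_apply_inl] at this
      by_cases hf : f i <;> by_cases hf' : f' i <;> simp [hf, hf'] at this <;>
        simp [hf, hf', this]
    have hf : f = f' := funext fun i => (h2 i).1
    have hσ : σ = σ' := Equiv.ext fun i => (h2 i).2
    simp [hf, hσ]
  · rintro ⟨c, hc⟩
    have hcpt : ∀ x, c (gMatch n x) = gMatch n (c x) := by
      intro x
      have := congrArg (fun σ : Equiv.Perm (Fin n ⊕ Fin n) => σ x) hc
      simpa using this
    -- define σf and ff
    set σf : Fin n → Fin n := fun i => Sum.elim id id (c (Sum.inl i)) with hσf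
    set ff : Fin n → Bool := fun i => (c (Sum.inl i)).isRight with hff
    have hpair : ∀ i, c (Sum.inl i) = (if ff i then Sum.inr (σf i) else Sum.inl (σf i)) := by
      intro i
      rcases hci : c (Sum.inl i) with j | j <;> simp [hff, hσf, hci]
    have hpair' : ∀ i, c (Sum.inr i) = (if ff i then Sum.inl (σf i) else Sum.inr (σf i)) := by
      intro i
      have := hcpt (Sum.inl i)
      rw [show gMatch n (Sum.inl i) = Sum.inr i from rfl] at this
      rw [this, hpair i]
      by_cases h : ff i <;> simp [h, gMatch]
    have hinj : Function.Injective σf := by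
      intro i i' hii
      by_cases h : ff i <;> by_cases h' : ff i'
      · have hcc : c (Sum.inl i) = c (Sum.inl i') := by simp [hpair, h, h', hii]
        simpa using c.injective hcc
      · have hcc : c (Sum.inl i) = c (Sum.inr i') := by simp [hpair, hpair', h, h', hii]
        simpa using c.injective hcc
      · have hcc : c (Sum.inr i) = c (Sum.inl i') := by simp [hpair, hpair', h, h', hii]
        simpa using c.injective hcc
      · have hcc : c (Sum.inl i) = c (Sum.inl i') := by simp [hpair, h, h', hii]
        simpa using c.injective hcc
    have hbij : Function.Bijective σf := Finite.injective_iff_bijective.1 hinj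
    refine ⟨(Equiv.ofBijective σf hbij, ff), ?_⟩
    apply Subtype.ext
    show bigT _ = c
    ext x
    rcases x with i | i
    · rw [bigT_apply_inl, hpair i]
      rfl
    · rw [bigT_apply_inr, hpair' i]
      rfl

end Central



theorem double_coset_connection_coefficients
    (n : ℕ) (hn : 1 ≤ n) (l m v : Multiset ℕ)
    (hl : (∀ a ∈ l, 0 < a) ∧ l.sum = n)
    (hm : (∀ a ∈ m, 0 < a) ∧ m.sum = n)
    (hv : (∀ a ∈ v, 0 < a) ∧ v.sum = n)
    (π : Equiv.Perm (Fin n)) (hπ : orbitType π = l)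
    (ω₀ : Equiv.Perm (Fin n ⊕ Fin n)) (hω₀ : ω₀ ∈ Kset (n := n) l) :
    Set.ncard {w : Equiv.Perm (Fin n ⊕ Fin n) × Equiv.Perm (Fin n ⊕ Fin n) |
        w.1 ∈ Kset (n := n) m ∧ w.2 ∈ Kset (n := n) v ∧ w.1 * w.2 = ω₀}
      = 2 ^ n * n.factorial * Set.ncard (Gset m v π) := by
  classical
  set g : Equiv.Perm (Fin n ⊕ Fin n) := gMatch n with hgdef
  have hgm : IsMatching g := gMatch_matching
  set e₀ : Equiv.Perm (Fin n ⊕ Fin n) := ω₀ * g * ω₀⁻¹ with he₀def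
  have he₀m : IsMatching e₀ := hgm.conj ω₀
  have hbOT : orbitType (g * bMatch π) = l + l := orbitType_g_bMatch π hπ
  have hge₀ : orbitType (g * e₀) = l + l := by
    have h1 : g * e₀ = g * ω₀ * g * ω₀⁻¹ := by rw [he₀def]; group
    rw [h1]
    exact hω₀
  obtain ⟨c₀, hc₀g, hc₀e⟩ := pair_conj hgm he₀m hgm (bMatch_matching π)
    (by rw [hge₀, hbOT])
  have hcomm : c₀ * g = g * c₀ := by
    calc c₀ * g = (c₀ * g * c₀⁻¹) * c₀ := by group
    _ = g * c₀ := by rw [hc₀g]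
  have hcomm' : g * c₀⁻¹ = c₀⁻¹ * g := by
    calc g * c₀⁻¹ = c₀⁻¹ * (c₀ * g) * c₀⁻¹ := by group
    _ = c₀⁻¹ * (g * c₀) * c₀⁻¹ := by rw [hcomm]
    _ = c₀⁻¹ * g := by group
  have hc₀e' : c₀⁻¹ * bMatch π * c₀ = e₀ := by
    rw [← hc₀e]
    group
  -- key orbit-type conversion for the second coordinate
  have hOT : ∀ ω : Equiv.Perm (Fin n ⊕ Fin n),
      orbitType (g * (ω⁻¹ * ω₀) * g * (ω⁻¹ * ω₀)⁻¹)
        = orbitType (e₀ * (ω * g * ω⁻¹)) := by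
    intro ω
    set u := ω⁻¹ * ω₀ with hu
    have hA : (u * g * u⁻¹ * g)⁻¹ = g * (u * g * u⁻¹) := by
      rw [mul_inv_rev, (hgm.conj u).inv_eq, hgm.inv_eq]
    have h2 : g * u * g * u⁻¹ = (u * g * u⁻¹ * g)⁻¹ := by
      rw [hA]
      group
    have h3 : u * g * u⁻¹ * g = ω⁻¹ * (e₀ * (ω * g * ω⁻¹)) * ω := by
      rw [hu, he₀def]
      group
    have h4 := orbitType_conj ω⁻¹ (e₀ * (ω * g * ω⁻¹))
    rw [inv_inv] at h4
    rw [h2, orbitType_inv, h3, h4]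
  -- membership characterizations
  have hKm : ∀ ω : Equiv.Perm (Fin n ⊕ Fin n),
      ω ∈ Kset (n := n) m ↔ orbitType (g * (ω * g * ω⁻¹)) = m + m := by
    intro ω
    have h1 : g * (ω * g * ω⁻¹) = g * ω * g * ω⁻¹ := by group
    rw [Kset, Set.mem_setOf_eq, h1]
  have hKv : ∀ ω : Equiv.Perm (Fin n ⊕ Fin n),
      ω⁻¹ * ω₀ ∈ Kset (n := n) v ↔ orbitType (e₀ * (ω * g * ω⁻¹)) = v + v := by
    intro ω
    rw [Kset, Set.mem_setOf_eq, hOT ω]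
  -- the intermediate sets
  set T : Set (Equiv.Perm (Fin n ⊕ Fin n)) :=
    {δ | IsMatching δ ∧ orbitType (g * δ) = m + m ∧ orbitType (e₀ * δ) = v + v} with hT
  set Z : Set (Equiv.Perm (Fin n ⊕ Fin n)) := {c | c * g = g * c} with hZ
  set Q : Set (Equiv.Perm (Fin n ⊕ Fin n)) :=
    {ω | ω ∈ Kset (n := n) m ∧ ω⁻¹ * ω₀ ∈ Kset (n := n) v} with hQ
  set P : Set (Equiv.Perm (Fin n ⊕ Fin n) × Equiv.Perm (Fin n ⊕ Fin n)) :=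
    {w | w.1 ∈ Kset (n := n) m ∧ w.2 ∈ Kset (n := n) v ∧ w.1 * w.2 = ω₀} with hP
  -- P ≃ Q
  have htoQ : ∀ w ∈ P, w.1 ∈ Q := by
    rintro ⟨w1, w2⟩ ⟨h1, h2, h3⟩
    refine ⟨h1, ?_⟩
    have h4 : w1⁻¹ * ω₀ = w2 := by rw [← h3]; group
    rw [h4]
    exact h2
  have htoP : ∀ ω ∈ Q, (ω, ω⁻¹ * ω₀) ∈ P := by
    rintro ω ⟨h1, h2⟩
    exact ⟨h1, h2, by group⟩
  have ePQ : ↥P ≃ ↥Q := by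
    refine ⟨fun w => ⟨w.1.1, htoQ w.1 w.2⟩, fun ω => ⟨(ω.1, ω.1⁻¹ * ω₀), htoP ω.1 ω.2⟩, ?_, ?_⟩
    · rintro ⟨⟨w1, w2⟩, hw1, hw2, hw3⟩
      apply Subtype.ext
      have h4 : w1⁻¹ * ω₀ = w2 := by rw [← hw3]; group
      simp only [Prod.mk.injEq]
      exact ⟨trivial, h4⟩
    · rintro ⟨ω, hω1, hω2⟩
      rfl
  -- T × Z ≃ Q
  have hsec : ∀ δ : ↥T, ∃ ω : Equiv.Perm (Fin n ⊕ Fin n), ω * g * ω⁻¹ = (δ : Equiv.Perm (Fin n ⊕ Fin n)) :=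
    fun δ => matching_conj_g δ.2.1
  choose s hs using hsec
  have hconj_mul : ∀ (δ : ↥T) (c : ↥Z),
      (s δ * (c : Equiv.Perm (Fin n ⊕ Fin n))) * g * (s δ * (c : Equiv.Perm (Fin n ⊕ Fin n)))⁻¹
        = (δ : Equiv.Perm (Fin n ⊕ Fin n)) := by
    intro δ c
    have hcid : (c : Equiv.Perm (Fin n ⊕ Fin n)) * g * (c : Equiv.Perm (Fin n ⊕ Fin n))⁻¹ = g := by
      have h5 : (c : Equiv.Perm (Fin n ⊕ Fin n)) * g = g * c := c.2
      rw [h5]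
      group
    calc (s δ * (c : Equiv.Perm (Fin n ⊕ Fin n))) * g
          * (s δ * (c : Equiv.Perm (Fin n ⊕ Fin n)))⁻¹
        = s δ * ((c : Equiv.Perm (Fin n ⊕ Fin n)) * g * (c : Equiv.Perm (Fin n ⊕ Fin n))⁻¹)
          * (s δ)⁻¹ := by group
    _ = s δ * g * (s δ)⁻¹ := by rw [hcid]
    _ = (δ : Equiv.Perm (Fin n ⊕ Fin n)) := hs δ
  have hmemQ : ∀ (δ : ↥T) (c : ↥Z), (s δ * (c : Equiv.Perm (Fin n ⊕ Fin n))) ∈ Q := by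
    intro δ c
    constructor
    · rw [hKm, hconj_mul δ c]
      exact δ.2.2.1
    · rw [hKv, hconj_mul δ c]
      exact δ.2.2.2
  have eTZQ : ↥T × ↥Z ≃ ↥Q := by
    apply Equiv.ofBijective (f := fun wc : ↥T × ↥Z =>
      (⟨s wc.1 * (wc.2 : Equiv.Perm (Fin n ⊕ Fin n)), hmemQ wc.1 wc.2⟩ : ↥Q))
    constructor
    · rintro ⟨δ, c⟩ ⟨δ', c'⟩ h
      rw [Subtype.ext_iff] at h
      have hval : s δ * (c : Equiv.Perm (Fin n ⊕ Fin n)) = s δ' * c' := h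
      have hδδ : (δ : Equiv.Perm (Fin n ⊕ Fin n)) = δ' := by
        rw [← hconj_mul δ c, ← hconj_mul δ' c', hval]
      have hδsub : δ = δ' := Subtype.ext hδδ
      subst hδsub
      have hcc : (c : Equiv.Perm (Fin n ⊕ Fin n)) = c' := mul_left_cancel hval
      rw [Prod.mk.injEq]
      exact ⟨rfl, Subtype.ext hcc⟩
    · rintro ⟨ω, hω1, hω2⟩
      have hδT : (ω * g * ω⁻¹) ∈ T := ⟨hgm.conj ω, (hKm ω).1 hω1, (hKv ω).1 hω2⟩
      set δ : ↥T := ⟨ω * g * ω⁻¹, hδT⟩ with hδdef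
      have hωδ : ω * g * ω⁻¹ = (δ : Equiv.Perm (Fin n ⊕ Fin n)) := rfl
      have hcZ : ((s δ)⁻¹ * ω) ∈ Z := by
        show ((s δ)⁻¹ * ω) * g = g * ((s δ)⁻¹ * ω)
        apply mul_left_cancel (a := s δ)
        have h9 : (s δ) * (g * ((s δ)⁻¹ * ω)) = ((s δ) * g * (s δ)⁻¹) * ω := by group
        rw [h9, hs δ, ← hωδ]
        group
      refine ⟨(δ, ⟨(s δ)⁻¹ * ω, hcZ⟩), ?_⟩
      apply Subtype.ext
      show s δ * ((s δ)⁻¹ * ω) = ω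
      group
  -- T ≃ Gset
  have hTG : ∀ δ ∈ T, (c₀ * δ * c₀⁻¹) ∈ Gset m v π := by
    rintro δ ⟨hδm, hδ1, hδ2⟩
    refine ⟨hδm.conj c₀, ?_, ?_⟩
    · have h1 : g * (c₀ * δ * c₀⁻¹) = c₀ * (g * δ) * c₀⁻¹ := by
        calc g * (c₀ * δ * c₀⁻¹) = (g * c₀) * δ * c₀⁻¹ := by group
        _ = (c₀ * g) * δ * c₀⁻¹ := by rw [hcomm]
        _ = c₀ * (g * δ) * c₀⁻¹ := by group
      rw [← hgdef, h1, orbitType_conj]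
      exact hδ1
    · have h2 : bMatch π * (c₀ * δ * c₀⁻¹) = c₀ * (e₀ * δ) * c₀⁻¹ := by
        rw [← hc₀e]
        group
      rw [h2, orbitType_conj]
      exact hδ2
  have hGT : ∀ δ' ∈ Gset m v π, (c₀⁻¹ * δ' * c₀) ∈ T := by
    rintro δ' ⟨hδm, hδ1, hδ2⟩
    have hC : IsMatching (c₀⁻¹ * δ' * c₀) := by
      have h0 := hδm.conj c₀⁻¹
      rwa [inv_inv] at h0
    refine ⟨hC, ?_, ?_⟩
    · have h1 : g * (c₀⁻¹ * δ' * c₀) = c₀⁻¹ * (g * δ') * c₀ := by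
        calc g * (c₀⁻¹ * δ' * c₀) = (g * c₀⁻¹) * δ' * c₀ := by group
        _ = (c₀⁻¹ * g) * δ' * c₀ := by rw [hcomm']
        _ = c₀⁻¹ * (g * δ') * c₀ := by group
      have h4 := orbitType_conj c₀⁻¹ (g * δ')
      rw [inv_inv] at h4
      rw [h1, h4]
      rw [← hgdef] at hδ1
      exact hδ1
    · have h2 : e₀ * (c₀⁻¹ * δ' * c₀) = c₀⁻¹ * (bMatch π * δ') * c₀ := by
        rw [← hc₀e']
        group
      have h4 := orbitType_conj c₀⁻¹ (bMatch π * δ')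
      rw [inv_inv] at h4
      rw [h2, h4]
      exact hδ2
  have eTG : ↥T ≃ ↥(Gset m v π) := by
    refine ⟨fun δ => ⟨c₀ * δ * c₀⁻¹, hTG δ δ.2⟩, fun δ' => ⟨c₀⁻¹ * δ' * c₀, hGT δ' δ'.2⟩, ?_, ?_⟩
    · intro δ
      apply Subtype.ext
      show c₀⁻¹ * (c₀ * (δ : Equiv.Perm (Fin n ⊕ Fin n)) * c₀⁻¹) * c₀ = δ
      group
    · intro δ'
      apply Subtype.ext
      show c₀ * (c₀⁻¹ * (δ' : Equiv.Perm (Fin n ⊕ Fin n)) * c₀) * c₀⁻¹ = δ'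
      group
  -- centralizer cardinality
  have esub : (Equiv.Perm (Fin n) × (Fin n → Bool))
      ≃ {c : Equiv.Perm (Fin n ⊕ Fin n) // c * gMatch n = gMatch n * c} :=
    Equiv.ofBijective _ (bigT_bij (n := n))
  have eZsub : {c : Equiv.Perm (Fin n ⊕ Fin n) // c * gMatch n = gMatch n * c} ≃ ↥Z :=
    Equiv.subtypeEquivRight (fun c => by rw [hZ, ← hgdef]; rfl)
  have hZcard : Nat.card ↥Z = 2 ^ n * n.factorial := by
    rw [← Nat.card_congr (esub.trans eZsub)]
    rw [Nat.card_eq_fintype_card, Fintype.card_prod, Fintype.card_perm, Fintype.card_fin,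
      Fintype.card_fun, Fintype.card_bool, Fintype.card_fin]
    ring
  -- finish
  calc Set.ncard P = Nat.card ↥P := (Nat.card_coe_set_eq P).symm
  _ = Nat.card ↥Q := Nat.card_congr ePQ
  _ = Nat.card (↥T × ↥Z) := (Nat.card_congr eTZQ).symm
  _ = Nat.card ↥T * Nat.card ↥Z := Nat.card_prod _ _
  _ = Nat.card ↥(Gset m v π) * Nat.card ↥Z := by rw [Nat.card_congr eTG]
  _ = 2 ^ n * n.factorial * Set.ncard (Gset m v π) := by
      rw [hZcard, Nat.card_coe_set_eq]
      ring
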